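/- For all integers 1 ≤ d ≤ j ≤ n, 1 ≤ c ≤ n, all strictly increasing sequences 1 ≤ t_1 < ... < t_c ≤ n and 1 ≤ s_1 < ... < s_d ≤ j, one has ∑_{i=1}^{d} ∑_{ℓ=1}^{c} C(t_ℓ - 1, s_i - 1) C(n - t_ℓ, j - s_i) ≤ ∑_{i=1}^{d} ∑_{ℓ=1}^{c} C(ℓ-1, i-1) C(n-ℓ, j-i). -/

import Mathlib

open Finset

/-- Binomial coefficient `C(m,k)` with the convention that `C(m,k) = 0`
whenever `m < k` or `k < 0` or `m < 0`, and `C(0,0) = 1`. -/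
def intChoose (m k : ℤ) : ℕ :=
  if 0 ≤ k ∧ k ≤ m then (m.toNat).choose k.toNat else 0

lemma intChoose_natCast (a b : ℕ) : intChoose (a : ℤ) (b : ℤ) = a.choose b := by
  simp only [intChoose, Int.toNat_natCast]
  split
  · rfl
  · rename_i h
    have : a < b := by omega
    exact (Nat.choose_eq_zero_of_lt this).symm


lemma count_rank (n j s t : ℕ) (hs1 : 1 ≤ s) (hsj : s ≤ j) (ht1 : 1 ≤ t) (htn : t ≤ n) :
    ((powersetCard j (Icc 1 n)).filter (fun A => t ∈ A ∧ (A ∩ Icc 1 t).card = s)).card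
      = (t-1).choose (s-1) * (n-t).choose (j-s) := by
  have hprod : (((powersetCard (s-1) (Icc 1 (t-1))) ×ˢ (powersetCard (j-s) (Icc (t+1) n))).card)
      = (t-1).choose (s-1) * (n-t).choose (j-s) := by
    rw [card_product, card_powersetCard, card_powersetCard, Nat.card_Icc, Nat.card_Icc]
    congr 2 <;> omega
  rw [← hprod]
  apply Finset.card_bij' (fun A _ => (A ∩ Icc 1 (t-1), A ∩ Icc (t+1) n))
    (fun p _ => insert t (p.1 ∪ p.2))
  · -- forward mem
    intro A hA
    simp only [mem_filter, mem_powersetCard] at hA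
    obtain ⟨⟨hAsub, hAcard⟩, htA, hrk⟩ := hA
    have hsplit : A ∩ Icc 1 t = insert t (A ∩ Icc 1 (t-1)) := by
      ext x
      simp only [mem_inter, mem_insert, mem_Icc]
      constructor
      · rintro ⟨hx, h1, h2⟩
        rcases eq_or_ne x t with rfl | hne
        · exact Or.inl rfl
        · exact Or.inr ⟨hx, h1, by omega⟩
      · rintro (rfl | ⟨hx, h1, h2⟩)
        · exact ⟨htA, le_refl _ |>.trans (by omega), le_refl _⟩
        · exact ⟨hx, h1, by omega⟩
    have hc1 : (A ∩ Icc 1 (t-1)).card = s - 1 := by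
      have : t ∉ A ∩ Icc 1 (t-1) := by simp [mem_Icc]; omega
      have := Finset.card_insert_of_notMem this
      rw [← hsplit, hrk] at this
      omega
    have hc2 : (A ∩ Icc (t+1) n).card = j - s := by
      have hdisj : Disjoint (A ∩ Icc 1 t) (A ∩ Icc (t+1) n) := by
        apply Finset.disjoint_left.mpr
        intro x hx hx'
        simp only [mem_inter, mem_Icc] at hx hx'
        omega
      have hun : (A ∩ Icc 1 t) ∪ (A ∩ Icc (t+1) n) = A := by
        ext x
        simp only [mem_union, mem_inter, mem_Icc]
        constructor
        · rintro (⟨hx, _⟩ | ⟨hx, _⟩) <;> exact hx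
        · intro hx
          have := hAsub hx
          simp only [mem_Icc] at this
          rcases le_or_gt x t with h | h
          · exact Or.inl ⟨hx, by omega⟩
          · exact Or.inr ⟨hx, by omega⟩
      have := Finset.card_union_of_disjoint hdisj
      rw [hun, hrk, hAcard] at this
      omega
    simp only [mem_product, mem_powersetCard]
    refine ⟨⟨inter_subset_right.trans ?_, hc1⟩, ⟨inter_subset_right.trans ?_, hc2⟩⟩
    · exact subset_refl _
    · exact subset_refl _
  · -- backward mem
    intro p hp
    simp only [mem_product, mem_powersetCard] at hp
    obtain ⟨⟨hB, hBc⟩, hC, hCc⟩ := hp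
    have htB : t ∉ p.1 := fun h => by have := hB h; simp only [mem_Icc] at this; omega
    have htC : t ∉ p.2 := fun h => by have := hC h; simp only [mem_Icc] at this; omega
    have hdisj : Disjoint p.1 p.2 := by
      apply Finset.disjoint_left.mpr
      intro x hx hx'
      have h1 := hB hx; have h2 := hC hx'
      simp only [mem_Icc] at h1 h2; omega
    simp only [mem_filter, mem_powersetCard]
    refine ⟨⟨?_, ?_⟩, ?_, ?_⟩
    · intro x hx
      simp only [mem_insert, mem_union] at hx
      rcases hx with rfl | hx | hx
      · simp [mem_Icc]; omega
      · have := hB hx; simp only [mem_Icc] at this ⊢; omega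
      · have := hC hx; simp only [mem_Icc] at this ⊢; omega
    · rw [card_insert_of_notMem (by simp [htB, htC]), card_union_of_disjoint hdisj, hBc, hCc]
      omega
    · simp
    · have : insert t (p.1 ∪ p.2) ∩ Icc 1 t = insert t p.1 := by
        ext x
        simp only [mem_inter, mem_insert, mem_union, mem_Icc]
        constructor
        · rintro ⟨rfl | hx | hx, h1, h2⟩
          · exact Or.inl rfl
          · exact Or.inr hx
          · have := hC hx; simp only [mem_Icc] at this; omega
        · rintro (rfl | hx)
          · exact ⟨Or.inl rfl, by omega, le_refl _⟩
          · have := hB hx; simp only [mem_Icc] at this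
            exact ⟨Or.inr (Or.inl hx), by omega, by omega⟩
      rw [this, card_insert_of_notMem htB, hBc]
      omega
  · -- left inverse
    intro A hA
    simp only [mem_filter, mem_powersetCard] at hA
    obtain ⟨⟨hAsub, hAcard⟩, htA, hrk⟩ := hA
    ext x
    simp only [mem_insert, mem_union, mem_inter, mem_Icc]
    constructor
    · rintro (rfl | ⟨hx, _⟩ | ⟨hx, _⟩) <;> first | exact htA | exact hx
    · intro hx
      have := hAsub hx
      simp only [mem_Icc] at this
      rcases eq_or_ne x t with rfl | hne
      · exact Or.inl rfl
      · rcases le_or_gt x t with h | h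
        · exact Or.inr (Or.inl ⟨hx, by omega⟩)
        · exact Or.inr (Or.inr ⟨hx, by omega⟩)
  · -- right inverse
    intro p hp
    simp only [mem_product, mem_powersetCard] at hp
    obtain ⟨⟨hB, hBc⟩, hC, hCc⟩ := hp
    have h1 : insert t (p.1 ∪ p.2) ∩ Icc 1 (t-1) = p.1 := by
      ext x
      simp only [mem_inter, mem_insert, mem_union, mem_Icc]
      constructor
      · rintro ⟨rfl | hx | hx, h1, h2⟩
        · omega
        · exact hx
        · have := hC hx; simp only [mem_Icc] at this; omega
      · intro hx
        have := hB hx; simp only [mem_Icc] at this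
        exact ⟨Or.inr (Or.inl hx), by omega, by omega⟩
    have h2 : insert t (p.1 ∪ p.2) ∩ Icc (t+1) n = p.2 := by
      ext x
      simp only [mem_inter, mem_insert, mem_union, mem_Icc]
      constructor
      · rintro ⟨rfl | hx | hx, h1, h2⟩
        · omega
        · have := hB hx; simp only [mem_Icc] at this; omega
        · exact hx
      · intro hx
        have := hC hx; simp only [mem_Icc] at this
        exact ⟨Or.inr (Or.inr hx), by omega, by omega⟩
    exact Prod.ext h1 h2



lemma count_inter (n j c k : ℕ) (T : Finset ℕ) (hT : T ⊆ Icc 1 n) (hTc : T.card = c)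
    (hk : k ≤ j) :
    ((powersetCard j (Icc 1 n)).filter (fun A => (A ∩ T).card = k)).card
      = c.choose k * (n-c).choose (j-k) := by
  have hcard : (Icc 1 n \ T).card = n - c := by
    rw [card_sdiff_of_subset hT, Nat.card_Icc, hTc]; omega
  have hprod : ((powersetCard k T) ×ˢ (powersetCard (j-k) (Icc 1 n \ T))).card
      = c.choose k * (n-c).choose (j-k) := by
    rw [card_product, card_powersetCard, card_powersetCard, hTc, hcard]
  rw [← hprod]
  apply Finset.card_bij' (fun A _ => (A ∩ T, A \ T)) (fun p _ => p.1 ∪ p.2)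
  · intro A hA
    simp only [mem_filter, mem_powersetCard] at hA
    obtain ⟨⟨hAsub, hAcard⟩, hAk⟩ := hA
    simp only [mem_product, mem_powersetCard]
    refine ⟨⟨inter_subset_right, hAk⟩, fun x hx => ?_, ?_⟩
    · simp only [mem_sdiff] at hx ⊢
      exact ⟨hAsub hx.1, hx.2⟩
    · have := Finset.card_inter_add_card_sdiff A T
      omega
  · intro p hp
    simp only [mem_product, mem_powersetCard] at hp
    obtain ⟨⟨hB, hBc⟩, hC, hCc⟩ := hp
    have hdisj : Disjoint p.1 p.2 := by
      apply Finset.disjoint_left.mpr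
      intro x hx hx'
      exact ((mem_sdiff.mp (hC hx')).2 (hB hx)).elim
    simp only [mem_filter, mem_powersetCard]
    refine ⟨⟨union_subset (hB.trans hT) (hC.trans sdiff_subset), ?_⟩, ?_⟩
    · rw [card_union_of_disjoint hdisj, hBc, hCc]; omega
    · have : (p.1 ∪ p.2) ∩ T = p.1 := by
        ext x
        simp only [mem_inter, mem_union]
        constructor
        · rintro ⟨hx | hx, hxT⟩
          · exact hx
          · exact ((mem_sdiff.mp (hC hx)).2 hxT).elim
        · intro hx
          exact ⟨Or.inl hx, hB hx⟩
      rw [this, hBc]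
  · intro A hA
    simp only [mem_filter, mem_powersetCard] at hA
    ext x; simp only [mem_union, mem_inter, mem_sdiff]; tauto
  · intro p hp
    simp only [mem_product, mem_powersetCard] at hp
    obtain ⟨⟨hB, hBc⟩, hC, hCc⟩ := hp
    have h1 : (p.1 ∪ p.2) ∩ T = p.1 := by
      ext x
      simp only [mem_inter, mem_union]
      constructor
      · rintro ⟨hx | hx, hxT⟩
        · exact hx
        · exact ((mem_sdiff.mp (hC hx)).2 hxT).elim
      · intro hx
        exact ⟨Or.inl hx, hB hx⟩
    have h2 : (p.1 ∪ p.2) \ T = p.2 := by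
      ext x
      simp only [mem_sdiff, mem_union]
      constructor
      · rintro ⟨hx | hx, hxT⟩
        · exact (hxT (hB hx)).elim
        · exact hx
      · intro hx
        exact ⟨Or.inr hx, (mem_sdiff.mp (hC hx)).2⟩
    exact Prod.ext h1 h2



lemma sum_form (n j c : ℕ) (T : Finset ℕ) (hT : T ⊆ Icc 1 n) (hTc : T.card = c)
    (F : ℕ → ℕ) :
    ∑ A ∈ powersetCard j (Icc 1 n), F ((A ∩ T).card)
      = ∑ k ∈ range (j+1), F k * (c.choose k * (n-c).choose (j-k)) := by
  rw [← Finset.sum_fiberwise_of_maps_to (g := fun A => (A ∩ T).card)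
    (t := range (j+1)) ?hmaps]
  case hmaps =>
    intro A hA
    simp only [mem_powersetCard] at hA
    simp only [mem_range]
    have : (A ∩ T).card ≤ A.card := card_le_card inter_subset_left
    omega
  apply Finset.sum_congr rfl
  intro k hk
  simp only [mem_range] at hk
  rw [show ((powersetCard j (Icc 1 n)).filter (fun A => (A ∩ T).card = k))
      = ((powersetCard j (Icc 1 n)).filter (fun A => (A ∩ T).card = k)) from rfl]
  have hcount := count_inter n j c k T hT hTc (by omega)
  calc ∑ A ∈ (powersetCard j (Icc 1 n)).filter (fun A => (A ∩ T).card = k), F ((A ∩ T).card)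
      = ∑ A ∈ (powersetCard j (Icc 1 n)).filter (fun A => (A ∩ T).card = k), F k := by
        apply Finset.sum_congr rfl
        intro A hA
        rw [(mem_filter.mp hA).2]
    _ = _ := by
        rw [Finset.sum_const, smul_eq_mul, hcount]; ring



lemma card_inter_lt (A : Finset ℕ) (a b : ℕ) (hab : a < b) (hb : b ∈ A) :
    (A ∩ Icc 1 a).card < (A ∩ Icc 1 b).card := by
  apply Finset.card_lt_card
  constructor
  · intro x hx
    simp only [mem_inter, mem_Icc] at hx ⊢
    exact ⟨hx.1, hx.2.1, by omega⟩
  · intro hsub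
    have : b ∈ A ∩ Icc 1 a := hsub (by simp only [mem_inter, mem_Icc]; exact ⟨hb, by omega, le_refl _⟩)
    simp only [mem_inter, mem_Icc] at this
    omega

lemma pairs_le (n j c d : ℕ) (t s : ℕ → ℕ) (A : Finset ℕ)
    (ht_mono : ∀ l1 l2, 1 ≤ l1 → l1 < l2 → l2 ≤ c → t l1 < t l2)
    (hs_mono : ∀ i1 i2, 1 ≤ i1 → i1 < i2 → i2 ≤ d → s i1 < s i2) :
    ((Icc 1 d ×ˢ Icc 1 c).filter
        (fun p => t p.2 ∈ A ∧ (A ∩ Icc 1 (t p.2)).card = s p.1)).card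
      ≤ min d ((A ∩ (Icc 1 c).image t).card) := by
  set P := (Icc 1 d ×ˢ Icc 1 c).filter
      (fun p => t p.2 ∈ A ∧ (A ∩ Icc 1 (t p.2)).card = s p.1) with hP
  have hmemP : ∀ p ∈ P, (1 ≤ p.1 ∧ p.1 ≤ d) ∧ (1 ≤ p.2 ∧ p.2 ≤ c)
      ∧ t p.2 ∈ A ∧ (A ∩ Icc 1 (t p.2)).card = s p.1 := by
    intro p hp
    simp only [hP, mem_filter, mem_product, mem_Icc] at hp
    tauto
  have hkey : ∀ p ∈ P, ∀ q ∈ P, s p.1 = s q.1 → t p.2 = t q.2 := by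
    intro p hp q hq hse
    obtain ⟨_, _, hpA, hpc⟩ := hmemP p hp
    obtain ⟨_, _, hqA, hqc⟩ := hmemP q hq
    rcases lt_trichotomy (t p.2) (t q.2) with h | h | h
    · have := card_inter_lt A (t p.2) (t q.2) h hqA; omega
    · exact h
    · have := card_inter_lt A (t q.2) (t p.2) h hpA; omega
  have htinj : ∀ p ∈ P, ∀ q ∈ P, t p.2 = t q.2 → p.2 = q.2 := by
    intro p hp q hq hte
    obtain ⟨_, hp2, _, _⟩ := hmemP p hp
    obtain ⟨_, hq2, _, _⟩ := hmemP q hq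
    rcases lt_trichotomy p.2 q.2 with h | h | h
    · have := ht_mono p.2 q.2 hp2.1 h hq2.2; omega
    · exact h
    · have := ht_mono q.2 p.2 hq2.1 h hp2.2; omega
  have hsinj : ∀ p ∈ P, ∀ q ∈ P, s p.1 = s q.1 → p.1 = q.1 := by
    intro p hp q hq hse
    obtain ⟨hp1, _, _, _⟩ := hmemP p hp
    obtain ⟨hq1, _, _, _⟩ := hmemP q hq
    rcases lt_trichotomy p.1 q.1 with h | h | h
    · have := hs_mono p.1 q.1 hp1.1 h hq1.2; omega
    · exact h
    · have := hs_mono q.1 p.1 hq1.1 h hp1.2; omega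
  apply le_min
  · rw [show d = (Icc 1 d).card by rw [Nat.card_Icc]; omega]
    apply Finset.card_le_card_of_injOn Prod.fst
    · intro p hp
      obtain ⟨hp1, _, _, _⟩ := hmemP p hp
      simp only [mem_coe, mem_Icc]; exact hp1
    · intro p hp q hq h1
      have hse : s p.1 = s q.1 := by rw [h1]
      have h2 := htinj p hp q hq (hkey p hp q hq hse)
      exact Prod.ext h1 h2
  · apply Finset.card_le_card_of_injOn (fun p => t p.2)
    · intro p hp
      obtain ⟨_, hp2, hpA, _⟩ := hmemP p hp
      simp only [mem_coe, mem_inter, mem_image]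
      exact ⟨hpA, p.2, by simp only [mem_Icc]; exact hp2, rfl⟩
    · intro p hp q hq hte
      have h2 := htinj p hp q hq hte
      have hse : s p.1 = s q.1 := by
        obtain ⟨_, _, _, hpc⟩ := hmemP p hp
        obtain ⟨_, _, _, hqc⟩ := hmemP q hq
        rw [← hpc, ← hqc, h2]
      exact Prod.ext (hsinj p hp q hq hse) h2


lemma pairs_id_ge (n c d : ℕ) (A : Finset ℕ) :
    min d ((A ∩ Icc 1 c).card)
      ≤ ((Icc 1 d ×ˢ Icc 1 c).filter
          (fun p => p.2 ∈ A ∧ (A ∩ Icc 1 p.2).card = p.1)).card := by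
  set g : ℕ → ℕ := fun l => (A ∩ Icc 1 l).card with hg
  set M := A ∩ Icc 1 c with hM
  set m := M.card with hm
  have hMmem : ∀ l ∈ M, l ∈ A ∧ 1 ≤ l ∧ l ≤ c := by
    intro l hl
    simp only [hM, mem_inter, mem_Icc] at hl
    tauto
  have hginj : ∀ l ∈ M, ∀ l' ∈ M, g l = g l' → l = l' := by
    intro l hl l' hl' he
    have he' : (A ∩ Icc 1 l).card = (A ∩ Icc 1 l').card := he
    obtain ⟨hlA, _, _⟩ := hMmem l hl
    obtain ⟨hl'A, _, _⟩ := hMmem l' hl'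
    rcases lt_trichotomy l l' with h | h | h
    · have := card_inter_lt A l l' h hl'A; omega
    · exact h
    · have := card_inter_lt A l' l h hlA; omega
  have hgmem : ∀ l ∈ M, g l ∈ Icc 1 m := by
    intro l hl
    obtain ⟨hlA, hl1, hlc⟩ := hMmem l hl
    simp only [mem_Icc]
    constructor
    · have : l ∈ A ∩ Icc 1 l := by simp only [mem_inter, mem_Icc]; exact ⟨hlA, hl1, le_refl _⟩
      exact Finset.card_pos.mpr ⟨l, this⟩
    · apply Finset.card_le_card
      intro x hx
      simp only [mem_inter, mem_Icc] at hx
      simp only [hM, mem_inter, mem_Icc]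
      exact ⟨hx.1, hx.2.1, by omega⟩
  have himage : M.image g = Icc 1 m := by
    apply Finset.eq_of_subset_of_card_le
    · intro y hy
      simp only [mem_image] at hy
      obtain ⟨l, hl, rfl⟩ := hy
      exact hgmem l hl
    · rw [Finset.card_image_of_injOn hginj, Nat.card_Icc]
      omega
  set W := M.filter (fun l => g l ≤ d) with hW
  have hWimage : W.image g = (Icc 1 m).filter (fun y => y ≤ d) := by
    rw [← himage]
    ext y
    simp only [mem_image, mem_filter, hW]
    constructor
    · rintro ⟨l, ⟨hl, hld⟩, rfl⟩
      exact ⟨⟨l, hl, rfl⟩, hld⟩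
    · rintro ⟨⟨l, hl, rfl⟩, hld⟩
      exact ⟨l, ⟨hl, hld⟩, rfl⟩
  have hWcard : W.card = min m d := by
    have h1 : (W.image g).card = W.card :=
      Finset.card_image_of_injOn (fun l hl l' hl' =>
        hginj l (mem_filter.mp hl).1 l' (mem_filter.mp hl').1)
    have h2 : (Icc 1 m).filter (fun y => y ≤ d) = Icc 1 (min m d) := by
      ext y
      simp only [mem_filter, mem_Icc]
      omega
    rw [← h1, hWimage, h2, Nat.card_Icc]
    omega
  have hle : W.card ≤ ((Icc 1 d ×ˢ Icc 1 c).filter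
      (fun p => p.2 ∈ A ∧ (A ∩ Icc 1 p.2).card = p.1)).card := by
    apply Finset.card_le_card_of_injOn (fun l => (g l, l))
    · intro l hl
      simp only [hW, mem_coe, mem_filter] at hl
      obtain ⟨hlM, hld⟩ := hl
      obtain ⟨hlA, hl1, hlc⟩ := hMmem l hlM
      have := hgmem l hlM
      simp only [mem_Icc] at this
      simp only [mem_coe, mem_filter, mem_product, mem_Icc]
      exact ⟨⟨⟨this.1, hld⟩, hl1, hlc⟩, hlA, rfl⟩
    · intro l _ l' _ he
      exact congrArg Prod.snd he
  omega


lemma double_sum_eq (n j c d : ℕ) (t s : ℕ → ℕ)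
    (ht_bdd : ∀ l, 1 ≤ l → l ≤ c → 1 ≤ t l ∧ t l ≤ n)
    (hs_bdd : ∀ i, 1 ≤ i → i ≤ d → 1 ≤ s i ∧ s i ≤ j) :
    ∑ i ∈ Icc 1 d, ∑ l ∈ Icc 1 c, (t l - 1).choose (s i - 1) * (n - t l).choose (j - s i)
      = ∑ A ∈ powersetCard j (Icc 1 n),
          ((Icc 1 d ×ˢ Icc 1 c).filter
            (fun p => t p.2 ∈ A ∧ (A ∩ Icc 1 (t p.2)).card = s p.1)).card := by
  have step1 : ∀ i ∈ Icc 1 d, ∀ l ∈ Icc 1 c,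
      (t l - 1).choose (s i - 1) * (n - t l).choose (j - s i)
        = ∑ A ∈ powersetCard j (Icc 1 n),
            (if t l ∈ A ∧ (A ∩ Icc 1 (t l)).card = s i then 1 else 0) := by
    intro i hi l hl
    simp only [mem_Icc] at hi hl
    obtain ⟨hs1, hsj⟩ := hs_bdd i hi.1 hi.2
    obtain ⟨ht1, htn⟩ := ht_bdd l hl.1 hl.2
    rw [← count_rank n j (s i) (t l) hs1 hsj ht1 htn, card_filter]
  calc ∑ i ∈ Icc 1 d, ∑ l ∈ Icc 1 c, (t l - 1).choose (s i - 1) * (n - t l).choose (j - s i)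
      = ∑ i ∈ Icc 1 d, ∑ l ∈ Icc 1 c, ∑ A ∈ powersetCard j (Icc 1 n),
          (if t l ∈ A ∧ (A ∩ Icc 1 (t l)).card = s i then 1 else 0) := by
        apply Finset.sum_congr rfl; intro i hi
        apply Finset.sum_congr rfl; intro l hl
        exact step1 i hi l hl
    _ = ∑ i ∈ Icc 1 d, ∑ A ∈ powersetCard j (Icc 1 n), ∑ l ∈ Icc 1 c,
          (if t l ∈ A ∧ (A ∩ Icc 1 (t l)).card = s i then 1 else 0) :=
        Finset.sum_congr rfl (fun i _ => Finset.sum_comm)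
    _ = ∑ A ∈ powersetCard j (Icc 1 n), ∑ i ∈ Icc 1 d, ∑ l ∈ Icc 1 c,
          (if t l ∈ A ∧ (A ∩ Icc 1 (t l)).card = s i then 1 else 0) := Finset.sum_comm
    _ = _ := by
        apply Finset.sum_congr rfl; intro A _
        rw [card_filter, Finset.sum_product]


lemma main_nat (n j c d : ℕ) (t s : ℕ → ℕ)
    (hdj : d ≤ j) (hjn : j ≤ n) (hcn : c ≤ n)
    (ht_mono : ∀ l1 l2, 1 ≤ l1 → l1 < l2 → l2 ≤ c → t l1 < t l2)
    (ht_bdd : ∀ l, 1 ≤ l → l ≤ c → 1 ≤ t l ∧ t l ≤ n)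
    (hs_mono : ∀ i1 i2, 1 ≤ i1 → i1 < i2 → i2 ≤ d → s i1 < s i2)
    (hs_bdd : ∀ i, 1 ≤ i → i ≤ d → 1 ≤ s i ∧ s i ≤ j) :
    ∑ i ∈ Icc 1 d, ∑ l ∈ Icc 1 c, (t l - 1).choose (s i - 1) * (n - t l).choose (j - s i)
      ≤ ∑ i ∈ Icc 1 d, ∑ l ∈ Icc 1 c, (l - 1).choose (i - 1) * (n - l).choose (j - i) := by
  set T := (Icc 1 c).image t with hT
  have htinj : ∀ l1 ∈ Icc 1 c, ∀ l2 ∈ Icc 1 c, t l1 = t l2 → l1 = l2 := by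
    intro l1 h1 l2 h2 he
    simp only [mem_Icc] at h1 h2
    rcases lt_trichotomy l1 l2 with h | h | h
    · have := ht_mono l1 l2 h1.1 h h2.2; omega
    · exact h
    · have := ht_mono l2 l1 h2.1 h h1.2; omega
  have hTcard : T.card = c := by
    rw [hT, Finset.card_image_of_injOn htinj, Nat.card_Icc]; omega
  have hTsub : T ⊆ Icc 1 n := by
    intro x hx
    simp only [hT, mem_image] at hx
    obtain ⟨l, hl, rfl⟩ := hx
    simp only [mem_Icc] at hl
    obtain ⟨h1, h2⟩ := ht_bdd l hl.1 hl.2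
    simp only [mem_Icc]
    omega
  have hCsub : Icc 1 c ⊆ Icc 1 n := Icc_subset_Icc le_rfl hcn
  have hCcard : (Icc 1 c).card = c := by rw [Nat.card_Icc]; omega
  have hid : ∑ i ∈ Icc 1 d, ∑ l ∈ Icc 1 c, (l - 1).choose (i - 1) * (n - l).choose (j - i)
      = ∑ A ∈ powersetCard j (Icc 1 n),
          ((Icc 1 d ×ˢ Icc 1 c).filter
            (fun p => p.2 ∈ A ∧ (A ∩ Icc 1 p.2).card = p.1)).card := by
    have h := double_sum_eq n j c d id id (fun l h1 h2 => ⟨h1, le_trans h2 hcn⟩)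
      (fun i h1 h2 => ⟨h1, le_trans h2 hdj⟩)
    simpa only [id_eq] using h
  rw [double_sum_eq n j c d t s ht_bdd hs_bdd, hid]
  calc ∑ A ∈ powersetCard j (Icc 1 n),
        ((Icc 1 d ×ˢ Icc 1 c).filter
          (fun p => t p.2 ∈ A ∧ (A ∩ Icc 1 (t p.2)).card = s p.1)).card
      ≤ ∑ A ∈ powersetCard j (Icc 1 n), min d ((A ∩ T).card) :=
        Finset.sum_le_sum (fun A _ => pairs_le n j c d t s A ht_mono hs_mono)
    _ = ∑ A ∈ powersetCard j (Icc 1 n), min d ((A ∩ Icc 1 c).card) := by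
        rw [sum_form n j c T hTsub hTcard (fun x => min d x),
            sum_form n j c (Icc 1 c) hCsub hCcard (fun x => min d x)]
    _ ≤ ∑ A ∈ powersetCard j (Icc 1 n),
          ((Icc 1 d ×ˢ Icc 1 c).filter
            (fun p => p.2 ∈ A ∧ (A ∩ Icc 1 p.2).card = p.1)).card :=
        Finset.sum_le_sum (fun A _ => pairs_id_ge n c d A)

theorem double_sum_choose_le (n j c d : ℕ) (t s : ℕ → ℤ)
    (hd : 1 ≤ d) (hdj : d ≤ j) (hjn : j ≤ n) (hc : 1 ≤ c) (hcn : c ≤ n)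
    (ht_mono : ∀ l1 l2, 1 ≤ l1 → l1 < l2 → l2 ≤ c → t l1 < t l2)
    (ht_bdd : ∀ l, 1 ≤ l → l ≤ c → 1 ≤ t l ∧ t l ≤ (n : ℤ))
    (hs_mono : ∀ i1 i2, 1 ≤ i1 → i1 < i2 → i2 ≤ d → s i1 < s i2)
    (hs_bdd : ∀ i, 1 ≤ i → i ≤ d → 1 ≤ s i ∧ s i ≤ (j : ℤ)) :
    ∑ i ∈ Finset.Icc 1 d, ∑ l ∈ Finset.Icc 1 c,
        intChoose (t l - 1) (s i - 1) * intChoose ((n : ℤ) - t l) ((j : ℤ) - s i) ≤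
      ∑ i ∈ Finset.Icc 1 d, ∑ l ∈ Finset.Icc 1 c,
        intChoose ((l : ℤ) - 1) ((i : ℤ) - 1) * intChoose ((n : ℤ) - (l : ℤ)) ((j : ℤ) - (i : ℤ)) := by
  set tn : ℕ → ℕ := fun l => (t l).toNat with htn
  set sn : ℕ → ℕ := fun i => (s i).toNat with hsn
  have hL : ∑ i ∈ Finset.Icc 1 d, ∑ l ∈ Finset.Icc 1 c,
      intChoose (t l - 1) (s i - 1) * intChoose ((n : ℤ) - t l) ((j : ℤ) - s i)
      = ∑ i ∈ Icc 1 d, ∑ l ∈ Icc 1 c,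
          (tn l - 1).choose (sn i - 1) * (n - tn l).choose (j - sn i) := by
    apply Finset.sum_congr rfl
    intro i hi
    apply Finset.sum_congr rfl
    intro l hl
    simp only [mem_Icc] at hi hl
    obtain ⟨hs1, hsj⟩ := hs_bdd i hi.1 hi.2
    obtain ⟨ht1, htnn⟩ := ht_bdd l hl.1 hl.2
    have e1 : t l - 1 = ((tn l - 1 : ℕ) : ℤ) := by simp only [htn]; push_cast; omega
    have e2 : s i - 1 = ((sn i - 1 : ℕ) : ℤ) := by simp only [hsn]; push_cast; omega
    have e3 : (n : ℤ) - t l = ((n - tn l : ℕ) : ℤ) := by simp only [htn]; push_cast; omega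
    have e4 : (j : ℤ) - s i = ((j - sn i : ℕ) : ℤ) := by simp only [hsn]; push_cast; omega
    rw [e1, e2, e3, e4, intChoose_natCast, intChoose_natCast]
  have hR : ∑ i ∈ Finset.Icc 1 d, ∑ l ∈ Finset.Icc 1 c,
      intChoose ((l : ℤ) - 1) ((i : ℤ) - 1) * intChoose ((n : ℤ) - (l : ℤ)) ((j : ℤ) - (i : ℤ))
      = ∑ i ∈ Icc 1 d, ∑ l ∈ Icc 1 c, (l - 1).choose (i - 1) * (n - l).choose (j - i) := by
    apply Finset.sum_congr rfl
    intro i hi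
    apply Finset.sum_congr rfl
    intro l hl
    simp only [mem_Icc] at hi hl
    have e1 : (l : ℤ) - 1 = ((l - 1 : ℕ) : ℤ) := by push_cast; omega
    have e2 : (i : ℤ) - 1 = ((i - 1 : ℕ) : ℤ) := by push_cast; omega
    have e3 : (n : ℤ) - (l : ℤ) = ((n - l : ℕ) : ℤ) := by push_cast; omega
    have e4 : (j : ℤ) - (i : ℤ) = ((j - i : ℕ) : ℤ) := by push_cast; omega
    rw [e1, e2, e3, e4, intChoose_natCast, intChoose_natCast]
  rw [hL, hR]
  apply main_nat n j c d tn sn hdj hjn hcn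
  · intro l1 l2 h1 h2 h3
    have := ht_mono l1 l2 h1 h2 h3
    have b1 := ht_bdd l1 h1 (by omega)
    simp only [htn]
    omega
  · intro l h1 h2
    have := ht_bdd l h1 h2
    simp only [htn]
    omega
  · intro i1 i2 h1 h2 h3
    have := hs_mono i1 i2 h1 h2 h3
    have b1 := hs_bdd i1 h1 (by omega)
    simp only [hsn]
    omega
  · intro i h1 h2
    have := hs_bdd i h1 h2
    simp only [hsn]
    omega
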